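/- Let q = 2^(2e+1) with e ≥ 1, σ = 2^(e+1), and δ ∈ F_q with absolute trace 1. The system of equations over F_q in unknowns (s,t): s^2 + δ t^2 + st = δ and s^(σ+2) + t^σ + st = 1 (i.e., y_1 = 0, a_1 = δ, z_2 = 1) has exactly 3 solutions. -/

import Mathlib

/-- For `q = 2^(2e+1)`, `σ = 2^(e+1)` and `δ ∈ F_q` of absolute trace 1, the
system `s² + δt² + st = δ` and `s^(σ+2) + t^σ + st = 1` has exactly 3
solutions `(s,t) ∈ F_q × F_q`. -/
theorem stmt_18 (e : ℕ) (he : 1 ≤ e) (F : Type*) [Field F] [Fintype F]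
    (hF : Fintype.card F = 2 ^ (2 * e + 1)) (δ : F)
    (hδtr : ∑ i ∈ Finset.range (2 * e + 1), δ ^ (2 ^ i) = 1) :
    {p : F × F | p.1 ^ 2 + δ * p.2 ^ 2 + p.1 * p.2 = δ ∧
        p.1 ^ (2 ^ (e + 1) + 2) + p.2 ^ (2 ^ (e + 1)) + p.1 * p.2 = 1}.ncard
      = 3 := by
  classical
  -- characteristic 2
  have h2 : (2:F) = 0 := by
    have hcast : ((2^(2*e+1) : ℕ) : F) = 0 := by rw [← hF]; exact Nat.cast_card_eq_zero F
    have h : ((2:F))^(2*e+1) = 0 := by push_cast at hcast; exact_mod_cast hcast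
    exact pow_eq_zero_iff (by omega) |>.mp h
  -- Frobenius facts
  have hq : ∀ x : F, x^(2^(2*e+1)) = x := fun x => by rw [← hF]; exact FiniteField.pow_card x
  have hσσ : ∀ x : F, (x^(2^(e+1)))^(2^(e+1)) = x^2 := by
    intro x
    rw [← pow_mul, ← pow_add, show (e+1)+(e+1) = (2*e+1)+1 by ring, pow_succ, pow_mul, hq]
  have hhalf : ∀ x : F, (x^(2^(e+1)))^(2^e) = x := by
    intro x
    rw [← pow_mul, ← pow_add, show (e+1)+e = 2*e+1 by ring, hq]
  have haddk : ∀ (k:ℕ) (x y : F), (x+y)^(2^k) = x^(2^k)+y^(2^k) := by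
    intro k
    induction k with
    | zero => intro x y; simp
    | succ n ih =>
      intro x y
      rw [pow_succ, pow_mul, pow_mul, pow_mul, ih]
      linear_combination (x^(2^n) * y^(2^n)) * h2
  have haddσ : ∀ x y : F, (x+y)^(2^(e+1)) = x^(2^(e+1)) + y^(2^(e+1)) := haddk (e+1)
  -- δ ≠ 0
  have hδ : δ ≠ 0 := by
    intro h
    rw [h] at hδtr
    have : ∀ i ∈ Finset.range (2*e+1), (0:F)^(2^i) = 0 := by
      intro i _
      exact zero_pow (Nat.pow_pos (by norm_num)).ne'
    rw [Finset.sum_congr rfl this, Finset.sum_const_zero] at hδtr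
    exact zero_ne_one hδtr
  -- W u ≠ 0
  have hWne : ∀ u : F, u^(2^(e+1)) + u + 1 ≠ 0 := by
    intro u h
    have ha : u^(2^(e+1)) = u + 1 := by linear_combination h + (-u - 1) * h2
    have h1 : u^2 = u^(2^(e+1)) + 1 := by
      rw [← hσσ u, ha, haddσ, one_pow]
      linear_combination ha
    have hsq : u * (u+1) = 0 := by linear_combination h1 + ha + h2 + u*h2
    rcases mul_eq_zero.mp hsq with hu0 | hu1
    · rw [hu0] at h
      rw [zero_pow (Nat.pow_pos (by norm_num)).ne'] at h
      simp at h
    · have hu : u = 1 := by linear_combination hu1 - h2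
      rw [hu, one_pow] at h
      have : (1:F) = 0 := by linear_combination h - h2
      exact one_ne_zero this
  -- the special parameter
  set u₁ : F := (δ^(2^e+1))⁻¹ with hu₁def
  have hu₁ : u₁ ≠ 0 := inv_ne_zero (pow_ne_zero _ hδ)
  have hu₁σ : u₁^(2^(e+1)) = δ * u₁^2 := by
    have e1 : u₁^(2^(e+1)) = (δ * δ^(2^(e+1)))⁻¹ := by
      rw [hu₁def, ← inv_pow, ← pow_mul,
        show (2^e+1)*2^(e+1) = 2^(2*e+1) + 2^(e+1) by
          rw [add_mul, one_mul, ← pow_add, show e+(e+1) = 2*e+1 by ring],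
        pow_add, hq, mul_inv, inv_pow]
    have e2 : u₁^2 = (δ^(2^(e+1)) * δ^2)⁻¹ := by
      rw [hu₁def, ← inv_pow, ← pow_mul,
        show (2^e+1)*2 = 2^(e+1) + 2 by rw [add_mul, one_mul, ← pow_succ], pow_add,
        mul_inv, inv_pow, inv_pow]
    rw [e1, e2]
    have hδσ : δ^(2^(e+1)) ≠ 0 := pow_ne_zero _ hδ
    field_simp
  -- the third point
  set P : F × F := (u₁^(2^(e+1)) / (u₁^(2^(e+1)) + u₁ + 1),
    (u₁^(2^(e+1)) + 1) / (u₁^(2^(e+1)) + u₁ + 1)) with hPdef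
  -- oval membership for all parameterized points
  have hoval : ∀ u : F,
      (u^(2^(e+1)) / (u^(2^(e+1)) + u + 1))^(2^(e+1)+2)
      + ((u^(2^(e+1)) + 1) / (u^(2^(e+1)) + u + 1))^(2^(e+1))
      + (u^(2^(e+1)) / (u^(2^(e+1)) + u + 1)) * ((u^(2^(e+1)) + 1) / (u^(2^(e+1)) + u + 1)) = 1 := by
    intro u
    have hw := hWne u
    have hbσ : (u^(2^(e+1))+1)^(2^(e+1)) = u^2+1 := by rw [haddσ, hσσ, one_pow]
    have hWσ : (u^(2^(e+1))+u+1)^(2^(e+1)) = u^2 + u^(2^(e+1)) + 1 := by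
      rw [haddσ, haddσ, hσσ, one_pow]
    have key : (u^(2^(e+1)))^(2^(e+1)) * (u^(2^(e+1)))^2
        + (u^(2^(e+1))+1)^(2^(e+1)) * (u^(2^(e+1))+u+1)^2
        + (u^(2^(e+1))) * (u^(2^(e+1))+1) * (u^(2^(e+1))+u+1)^(2^(e+1))
        = (u^(2^(e+1))+u+1)^(2^(e+1)) * (u^(2^(e+1))+u+1)^2 := by
      rw [hσσ, hbσ, hWσ]
      linear_combination ((u^(2^(e+1)))^2*u^2 - (u^(2^(e+1)))^2*u - (u^(2^(e+1)))*u) * h2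
    rw [div_pow, div_pow, div_mul_div_comm]
    rw [div_add_div _ _ (pow_ne_zero _ hw) (pow_ne_zero _ hw),
      div_add_div _ _ (mul_ne_zero (pow_ne_zero _ hw) (pow_ne_zero _ hw)) (mul_ne_zero hw hw),
      div_eq_one_iff_eq (mul_ne_zero (mul_ne_zero (pow_ne_zero _ hw) (pow_ne_zero _ hw)) (mul_ne_zero hw hw)),
      pow_add (u^(2^(e+1))) (2^(e+1)) 2, pow_add (u^(2^(e+1))+u+1) (2^(e+1)) 2]
    linear_combination ((u^(2^(e+1))+u+1)^(2^(e+1)) * (u^(2^(e+1))+u+1)^2) * key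
  -- conic membership for the parameterized point when u^σ = δ u²
  have hconic : ∀ u : F, u^(2^(e+1)) = δ * u^2 →
      (u^(2^(e+1)) / (u^(2^(e+1)) + u + 1))^2
      + δ * ((u^(2^(e+1)) + 1) / (u^(2^(e+1)) + u + 1))^2
      + (u^(2^(e+1)) / (u^(2^(e+1)) + u + 1)) * ((u^(2^(e+1)) + 1) / (u^(2^(e+1)) + u + 1)) = δ := by
    intro u hu
    have hw := hWne u
    have key : (u^(2^(e+1)))^2 + δ * (u^(2^(e+1))+1)^2 + (u^(2^(e+1))) * (u^(2^(e+1))+1)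
        = δ * (u^(2^(e+1))+u+1)^2 := by
      linear_combination hu + ((u^(2^(e+1)))^2 - (u^(2^(e+1)))*δ*u - δ*u) * h2
    rw [div_pow, div_pow, div_mul_div_comm, ← mul_div_assoc]
    rw [div_add_div _ _ (pow_ne_zero _ hw) (pow_ne_zero _ hw),
      div_add_div _ _ (mul_ne_zero (pow_ne_zero _ hw) (pow_ne_zero _ hw)) (mul_ne_zero hw hw),
      div_eq_iff (mul_ne_zero (mul_ne_zero (pow_ne_zero _ hw) (pow_ne_zero _ hw)) (mul_ne_zero hw hw))]
    linear_combination ((u^(2^(e+1))+u+1)^2*(u^(2^(e+1))+u+1)^2) * key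
  -- the set equality
  have hset : {p : F × F | p.1 ^ 2 + δ * p.2 ^ 2 + p.1 * p.2 = δ ∧
      p.1 ^ (2 ^ (e + 1) + 2) + p.2 ^ (2 ^ (e + 1)) + p.1 * p.2 = 1}
      = {((0:F),(1:F)), ((1:F),(1:F)), P} := by
    ext ⟨s, t⟩
    simp only [Set.mem_setOf_eq, Set.mem_insert_iff, Set.mem_singleton_iff, Prod.mk.injEq]
    constructor
    · rintro ⟨hc, ho⟩
      by_cases ht : t = 1
      · subst ht
        have hs2 : s*(s+1) = 0 := by linear_combination hc
        rcases mul_eq_zero.mp hs2 with h0 | h1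
        · exact Or.inl ⟨h0, rfl⟩
        · exact Or.inr (Or.inl ⟨by linear_combination h1 - h2, rfl⟩)
      · right; right
        have hT : t + 1 ≠ 0 := fun h => ht (by linear_combination h - h2)
        have hs0 : s ≠ 0 := by
          intro h0
          apply ht
          rw [h0] at hc
          have h4 : δ*((t+1)*(t+1)) = 0 := by linear_combination hc + (δ*t + δ)*h2
          have h5 := (mul_eq_zero.mp h4).resolve_left hδ
          rcases mul_eq_zero.mp h5 with h6 | h6 <;> linear_combination h6 - h2
        -- oval relations
        have e2 : s^(2^(e+1))*s^2 + t^(2^(e+1)) + s*t = 1 := by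
          rw [← pow_add s (2^(e+1)) 2]; exact ho
        have e2' : (s^(2^(e+1)))^2*s^2 + t^2 + s^(2^(e+1))*t^(2^(e+1)) = 1 := by
          have c1 : (s^(2^(e+1))*s^2 + t^(2^(e+1)) + s*t)^(2^(e+1)) = 1 := by rw [e2, one_pow]
          rw [haddσ, haddσ, mul_pow, mul_pow, hσσ, hσσ, pow_right_comm] at c1
          linear_combination c1
        have key1 : s^(2^(e+1))*(1+s*t) = (1+t)^2 := by
          linear_combination e2' - s^(2^(e+1))*e2 + (s^(2^(e+1))*s*t - t - t^2)*h2
        have claim : s^(2^(e+1))*s^2 + s^(2^(e+1))*s*(t+1) + (t^(2^(e+1))+1)*(t+1)^2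
            = s^(2^(e+1))*s := by
          linear_combination (t+1)^2*e2 + s*t*key1
            + (1 - s^(2^(e+1))*s^2*t - s^(2^(e+1))*s^2*t^2 + 2*t + t^2)*h2
        -- the parameter
        set r : F := s/(t+1) with hrdef
        set u : F := r^(2^(e+1)+1) with hudef
        have hu2σr : u^(2^(e+1)) = r^(2^(e+1)+2) := by
          rw [hudef, ← pow_mul, show (2^(e+1)+1)*2^(e+1) = 2^(e+1)*2^(e+1) + 2^(e+1) by ring,
            pow_add r (2^(e+1)*2^(e+1)) (2^(e+1)), pow_mul r (2^(e+1)) (2^(e+1)), hσσ,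
            pow_add r (2^(e+1)) 2]
          ring
        have hTσ : (t+1)^(2^(e+1)) = t^(2^(e+1)) + 1 := by rw [haddσ, one_pow]
        have inv1 : (t+1) * (u^(2^(e+1)) + u + 1) = u := by
          rw [hu2σr, hudef, hrdef, div_pow, div_pow]
          field_simp
          rw [pow_add s (2^(e+1)) 2, pow_add s (2^(e+1)) 1, pow_add (t+1) (2^(e+1)) 2,
            pow_add (t+1) (2^(e+1)) 1, hTσ]
          linear_combination ((t^(2^(e+1))+1)*(t+1)^2)*claim
        have hu_ne : u ≠ 0 := by rw [hudef]; exact pow_ne_zero _ (div_ne_zero hs0 hT)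
        have inv2 : s * (u^(2^(e+1)) + u + 1) = u^(2^(e+1)) := by
          have hrT : s = r * (t+1) := by rw [hrdef]; field_simp
          have step : s * (u^(2^(e+1)) + u + 1) = r * ((t+1) * (u^(2^(e+1)) + u + 1)) := by
            linear_combination (u^(2^(e+1)) + u + 1) * hrT
          rw [step, inv1, hu2σr, hudef, show 2^(e+1)+2 = 2^(e+1)+1+1 by omega, pow_succ]
          ring
        have i3 : t * (u^(2^(e+1)) + u + 1) = u^(2^(e+1)) + 1 := by
          linear_combination inv1 + (-u^(2^(e+1)) - 1) * h2
        have cleared : (u^(2^(e+1)))^2 + δ*(u^(2^(e+1))+1)^2 + (u^(2^(e+1)))*(u^(2^(e+1))+1)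
            = δ*(u^(2^(e+1))+u+1)^2 := by
          linear_combination ((u^(2^(e+1))+u+1)^2)*hc
            + (-(2*(u^(2^(e+1)))+1) - s*(u^(2^(e+1))+u+1))*inv2
            + (-(δ*(u^(2^(e+1))+1+t*(u^(2^(e+1))+u+1))) - s*(u^(2^(e+1))+u+1))*i3
        have hu2 : u^(2^(e+1)) = δ*u^2 := by
          linear_combination cleared - ((u^(2^(e+1)))^2 - (u^(2^(e+1)))*δ*u - δ*u)*h2
        have h5 : u = δ^(2^e) * (u^2)^(2^e) := by
          rw [← mul_pow, ← hu2, hhalf]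
        have h6 : (u^2)^(2^e) = u^(2^(e+1)) := by
          rw [← pow_mul]
          congr 1
          exact (pow_succ' 2 e).symm
        have h7 : u = δ^(2^e+1) * u^2 := by
          calc u = δ^(2^e)*(u^2)^(2^e) := h5
          _ = δ^(2^e)*(δ*u^2) := by rw [h6, hu2]
          _ = δ^(2^e+1)*u^2 := by rw [pow_succ]; ring
        have h8 : u * δ^(2^e+1) = 1 := mul_left_cancel₀ hu_ne (by linear_combination -h7)
        have hs_eq : s = u^(2^(e+1)) / (u^(2^(e+1)) + u + 1) := by
          rw [eq_div_iff (hWne u)]; exact inv2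
        have ht_eq : t = (u^(2^(e+1)) + 1) / (u^(2^(e+1)) + u + 1) := by
          rw [eq_div_iff (hWne u)]; exact i3
        have huu₁ : u = u₁ := by rw [hu₁def]; exact eq_inv_of_mul_eq_one_left h8
        rw [hPdef, Prod.mk.injEq]
        exact ⟨by rw [hs_eq, huu₁], by rw [ht_eq, huu₁]⟩
    · rintro (⟨hs, ht⟩ | ⟨hs, ht⟩ | hP)
      · subst hs; subst ht
        constructor
        · norm_num
        · rw [zero_pow (by positivity : 2^(e+1)+2 ≠ 0), one_pow]
          norm_num
      · subst hs; subst ht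
        exact ⟨by linear_combination h2, by linear_combination h2⟩
      · rw [hPdef, Prod.mk.injEq] at hP
        obtain ⟨hs, ht⟩ := hP
        subst hs; subst ht
        exact ⟨hconic u₁ hu₁σ, hoval u₁⟩
  -- count
  rw [hset]
  have hP1 : ((0:F),(1:F)) ≠ P := by
    rw [hPdef, Ne, Prod.mk.injEq, not_and]
    intro h0 _
    exact (div_ne_zero (pow_ne_zero _ hu₁) (hWne u₁)) h0.symm
  have hP2 : ((1:F),(1:F)) ≠ P := by
    rw [hPdef, Ne, Prod.mk.injEq, not_and]
    intro _ h1
    rw [eq_comm, div_eq_one_iff_eq (hWne u₁)] at h1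
    exact hu₁ (by linear_combination -h1)
  have m1 : ((0:F),(1:F)) ∉ ({((1:F),(1:F)), P} : Set (F×F)) := by
    simp only [Set.mem_insert_iff, Set.mem_singleton_iff]
    push_neg
    refine ⟨fun hh => ?_, hP1⟩
    exact one_ne_zero (congrArg Prod.fst hh).symm
  have m2 : ((1:F),(1:F)) ∉ ({P} : Set (F×F)) := fun hh => hP2 (Set.mem_singleton_iff.mp hh)
  rw [Set.ncard_insert_of_notMem m1 (Set.toFinite _),
    Set.ncard_insert_of_notMem m2 (Set.toFinite _), Set.ncard_singleton]
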